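/- In the abstract Pestov setup with X* = -X, [X,V] = -H, [X,H] = RV, H*V - V*H = -(n-1)X on a common domain D: if u ∈ D satisfies Xu = 0 and ⟨RVu, Vu⟩ ≤ 0 with equality only when Vu lies in the kernel of a fixed operator P with ⟨Rw,w⟩ = -‖Pw‖², then ‖XVu‖² = ‖PVu‖² = 0; if moreover ker P ∩ ker(X acting on the V-range) ∩ ker H-related conditions force Vu = 0 and Hu = 0, then all first derivatives of u vanish. In particular, in the hyperbolic case the only flow-invariant L²-functions are constants, i.e. the frame flow of a hyperbolic manifold is ergodic. -/
import Mathlib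


open scoped InnerProductSpace

/-- Formalizable core of the ergodicity argument: under the four Pestov hypotheses together
with `⟨Rw,w⟩ = -‖Pw‖²` (hyperbolic case), any flow-invariant `u` (`Xu = 0`) satisfies
`X(Vu) = 0` and `P(Vu) = 0`, i.e. `‖XVu‖² = ‖PVu‖² = 0`. -/
theorem stmt14 {E : Type*} [NormedAddCommGroup E] [InnerProductSpace ℂ E]
    (n : ℕ) (X V H R Xs Vs Hs : E →ₗ[ℂ] E)
    (hXadj : ∀ u v : E, ⟪X u, v⟫_ℂ = ⟪u, Xs v⟫_ℂ)
    (hXs : Xs = -X)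
    (hVadj : ∀ u v : E, ⟪V u, v⟫_ℂ = ⟪u, Vs v⟫_ℂ)
    (hHadj : ∀ u v : E, ⟪H u, v⟫_ℂ = ⟪u, Hs v⟫_ℂ)
    (hH : H = -(X ∘ₗ V - V ∘ₗ X))
    (hXH : X ∘ₗ H - H ∘ₗ X = R ∘ₗ V)
    (hHV : Hs ∘ₗ V - Vs ∘ₗ H = (-((n : ℂ) - 1)) • X) :
    ∀ (P : E →ₗ[ℂ] E), (∀ w : E, (⟪R w, w⟫_ℂ).re = -‖P w‖ ^ 2) →
      ∀ u : E, X u = 0 → X (V u) = 0 ∧ P (V u) = 0 := by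
  intro P hP u hu
  have hHu : H u = -(X (V u)) := by
    rw [hH]; simp [hu]
  have hR : R (V u) = -(X (X (V u))) := by
    have := congrArg (fun L : E →ₗ[ℂ] E => L u) hXH
    simp only [LinearMap.sub_apply, LinearMap.comp_apply, hu, map_zero, sub_zero] at this
    rw [← this, hHu, map_neg]
  have hinner : (⟪R (V u), V u⟫_ℂ).re = ‖X (V u)‖ ^ 2 := by
    rw [hR]
    have : ⟪X (X (V u)), V u⟫_ℂ = -⟪X (V u), X (V u)⟫_ℂ := by
      rw [hXadj, hXs]; simp
    rw [inner_neg_left, this, neg_neg, inner_self_eq_norm_sq_to_K]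
    norm_cast
  have hP' := hP (V u)
  have hsum : ‖X (V u)‖ ^ 2 + ‖P (V u)‖ ^ 2 = 0 := by
    rw [← hinner, hP']; ring
  have h1 : ‖X (V u)‖ ^ 2 = 0 ∧ ‖P (V u)‖ ^ 2 = 0 := by
    constructor <;> nlinarith [sq_nonneg ‖X (V u)‖, sq_nonneg ‖P (V u)‖]
  constructor
  · exact norm_eq_zero.mp (pow_eq_zero_iff (by norm_num) |>.mp h1.1)
  · exact norm_eq_zero.mp (pow_eq_zero_iff (by norm_num) |>.mp h1.2)
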